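/- Let R be a unital ring and let I_0 ⊆ I_1 ⊆ ⋯ ⊆ I_m = R be an increasing chain of two-sided ideals. Let (p_k)_{k=0}^{m} be elements of R satisfying: (i) ∑_{k=0}^{m} p_k = 1; (ii) p_k ∈ I_k for every k; (iii) for every k ≥ 1 and every a ∈ I_{k−1}, a * p_k = 0 and p_k * a = 0; (iv) for every k and every a ∈ I_k, both a * p_k − a and p_k * a − a lie in I_{k−1} (where I_{−1} := {0}). Fix k, and suppose e ∈ R satisfies the same three characterizing properties at level k: e ∈ I_k; a * e = 0 and e * a = 0 for all a ∈ I_{k−1}; and a * e − a ∈ I_{k−1} and e * a − a ∈ I_{k−1} for all a ∈ I_k. Then e = p_k. -/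

import Mathlib

/-- Abstract uniqueness of higher order projectors.  Let `I (-1) = {0}` and let
`I 0 ≤ I 1 ≤ ⋯ ≤ I m = R` be an increasing chain of two-sided ideals of a unital
ring `R` (indexed by integers, with the convention `I (-1) = ⊥`).  Let
`p 0, …, p m` satisfy: (i) `∑ p k = 1`; (ii) `p k ∈ I k`; (iii) for `k ≥ 1`,
every `a ∈ I (k-1)` annihilates `p k` on both sides; (iv) for every `a ∈ I k`,
both `a * p k - a` and `p k * a - a` lie in `I (k-1)`.  If `e` satisfies the same
three characterizing properties at level `k`, then `e = p k`. -/
theorem filtered_ring_projector_unique {R : Type*} [Ring R]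
    (m : ℕ) (I : ℤ → TwoSidedIdeal R) (p : ℤ → R)
    (hneg : I (-1) = ⊥)
    (hchain : ∀ k : ℤ, -1 ≤ k → k < m → I k ≤ I (k + 1))
    (htop : I m = ⊤)
    (hsum : ∑ k ∈ Finset.Icc (0 : ℤ) m, p k = 1)
    (hmem : ∀ k : ℤ, 0 ≤ k → k ≤ m → p k ∈ I k)
    (hann : ∀ k : ℤ, 1 ≤ k → k ≤ m → ∀ a ∈ I (k - 1), a * p k = 0 ∧ p k * a = 0)
    (hfix : ∀ k : ℤ, 0 ≤ k → k ≤ m →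
      ∀ a ∈ I k, a * p k - a ∈ I (k - 1) ∧ p k * a - a ∈ I (k - 1))
    (k : ℤ) (hk0 : 0 ≤ k) (hkm : k ≤ m)
    (e : R)
    (hemem : e ∈ I k)
    (heann : ∀ a ∈ I (k - 1), a * e = 0 ∧ e * a = 0)
    (hefix : ∀ a ∈ I k, a * e - a ∈ I (k - 1) ∧ e * a - a ∈ I (k - 1)) :
    e = p k := by
  -- Monotonicity of the chain
  have mono : ∀ (n : ℕ) (a : ℤ), -1 ≤ a → a + n ≤ m → I a ≤ I (a + n) := by
    intro n
    induction n with
    | zero => intro a ha h; simp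
    | succ n ih =>
      intro a ha h
      have h1 : I a ≤ I (a + n) := ih a ha (by push_cast at h ⊢; omega)
      have h2 : I (a + n) ≤ I (a + n + 1) :=
        hchain (a + n) (by omega) (by push_cast at h ⊢; omega)
      have heq : (a : ℤ) + (n + 1 : ℕ) = a + n + 1 := by push_cast; ring
      rw [heq]
      exact h1.trans h2
  have mono' : ∀ a b : ℤ, -1 ≤ a → a ≤ b → b ≤ m → I a ≤ I b := by
    intro a b ha hab hbm
    have hb : b = a + ((b - a).toNat : ℤ) := by omega
    rw [hb]
    exact mono _ a ha (by omega)
  -- e - p k lies in I (k-1)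
  have hx : e - p k ∈ I (k - 1) := by
    have h1 : e * p k - p k ∈ I (k - 1) := (hefix (p k) (hmem k hk0 hkm)).2
    have h2 : e * p k - e ∈ I (k - 1) := (hfix k hk0 hkm e hemem).1
    have h3 := TwoSidedIdeal.sub_mem _ h2 h1
    have h4 : e * p k - e - (e * p k - p k) = -(e - p k) := by noncomm_ring
    rw [h4] at h3
    simpa using TwoSidedIdeal.neg_mem _ h3
  rcases eq_or_lt_of_le hk0 with hk | hk1
  · -- k = 0 : I (-1) = ⊥ forces e = p 0
    rw [← hk] at hx ⊢
    rw [show (0 : ℤ) - 1 = -1 by norm_num, hneg, TwoSidedIdeal.mem_bot] at hx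
    exact sub_eq_zero.mp hx
  · have hk1 : 1 ≤ k := hk1
    -- e = e * p k
    have h1 : e = e * p k := by
      have hsingle : ∑ j ∈ Finset.Icc (0 : ℤ) m, e * p j = e * p k := by
        apply Finset.sum_eq_single
        · intro j hj hjk
          simp only [Finset.mem_Icc] at hj
          rcases lt_or_gt_of_ne hjk with hlt | hgt
          · have hm : p j ∈ I (k - 1) :=
              mono' j (k - 1) (by omega) (by omega) (by omega) (hmem j hj.1 hj.2)
            exact (heann (p j) hm).2
          · have hm : e ∈ I (j - 1) :=
              mono' k (j - 1) (by omega) (by omega) (by omega) hemem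
            exact (hann j (by omega) hj.2 e hm).1
        · intro hk'
          exact absurd (Finset.mem_Icc.mpr ⟨hk0, hkm⟩) hk'
      calc e = e * 1 := (mul_one e).symm
        _ = e * ∑ j ∈ Finset.Icc (0 : ℤ) m, p j := by rw [hsum]
        _ = ∑ j ∈ Finset.Icc (0 : ℤ) m, e * p j := Finset.mul_sum _ _ _
        _ = e * p k := hsingle
    -- p k = p k * p k
    have h2 : p k = p k * p k := by
      have hsingle : ∑ j ∈ Finset.Icc (0 : ℤ) m, p j * p k = p k * p k := by
        apply Finset.sum_eq_single
        · intro j hj hjk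
          simp only [Finset.mem_Icc] at hj
          rcases lt_or_gt_of_ne hjk with hlt | hgt
          · have hm : p j ∈ I (k - 1) :=
              mono' j (k - 1) (by omega) (by omega) (by omega) (hmem j hj.1 hj.2)
            exact (hann k hk1 hkm (p j) hm).1
          · have hm : p k ∈ I (j - 1) :=
              mono' k (j - 1) (by omega) (by omega) (by omega) (hmem k hk0 hkm)
            exact (hann j (by omega) hj.2 (p k) hm).2
        · intro hk'
          exact absurd (Finset.mem_Icc.mpr ⟨hk0, hkm⟩) hk'
      calc p k = 1 * p k := (one_mul _).symm
        _ = (∑ j ∈ Finset.Icc (0 : ℤ) m, p j) * p k := by rw [hsum]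
        _ = ∑ j ∈ Finset.Icc (0 : ℤ) m, p j * p k := Finset.sum_mul _ _ _
        _ = p k * p k := hsingle
    have h3 : (e - p k) * p k = 0 := (hann k hk1 hkm (e - p k) hx).1
    calc e = e * p k := h1
      _ = (e - p k) * p k + p k * p k := by noncomm_ring
      _ = 0 + p k := by rw [h3, ← h2]
      _ = p k := zero_add _
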